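/- (Case κ(0) > 0 and κ'(1) = 1, polynomial convergence to 1.) Let κ be a nonlinear kernel map with a_0 > 0 and ∑_{k=1}^∞ k a_k = 1. Set α := 1 - a_0 - a_1, which is positive. Then for every ρ_0 ∈ (-1,1), the kernel sequence satisfies |ρ_ℓ - 1| ≤ |ρ_0 - 1| / (ℓ · α · |ρ_0 - 1| + 1) for all ℓ. -/

import Mathlib

/-- The kernel map associated to nonnegative coefficients `a`. -/
noncomputable def kernelMap (a : ℕ → ℝ) (ρ : ℝ) : ℝ := ∑' k, a k * ρ ^ k

private lemma geom_rw (x : ℝ) (k : ℕ) :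
    1 - x ^ k = (1 - x) * ∑ j ∈ Finset.range k, x ^ j := by
  linear_combination geom_sum_mul x k

private lemma pow_le_one_of_mem (x : ℝ) (hx : x ∈ Set.Icc (-1:ℝ) 1) (j : ℕ) : x ^ j ≤ 1 := by
  have h1 : |x| ≤ 1 := abs_le.mpr ⟨hx.1, hx.2⟩
  calc x ^ j ≤ |x ^ j| := le_abs_self _
    _ = |x| ^ j := abs_pow x j
    _ ≤ 1 := pow_le_one₀ (abs_nonneg x) h1

private lemma lemA (x : ℝ) (hx : x ∈ Set.Icc (-1:ℝ) 1) (k : ℕ) :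
    1 - x ^ k ≤ (k : ℝ) * (1 - x) := by
  rw [geom_rw]
  have hS : ∑ j ∈ Finset.range k, x ^ j ≤ (k : ℝ) := by
    calc ∑ j ∈ Finset.range k, x ^ j ≤ ∑ j ∈ Finset.range k, (1 : ℝ) :=
          Finset.sum_le_sum fun j _ => pow_le_one_of_mem x hx j
      _ = (k : ℝ) := by simp
  have hd : (0:ℝ) ≤ 1 - x := by linarith [hx.2]
  nlinarith

private lemma lemB (x : ℝ) (hx : x ∈ Set.Icc (-1:ℝ) 1) (k : ℕ) (hk : 2 ≤ k) :
    (1 - x) ^ 2 ≤ (k : ℝ) * (1 - x) - (1 - x ^ k) := by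
  rw [geom_rw]
  have hd : (0:ℝ) ≤ 1 - x := by linarith [hx.2]
  have hS : ∑ j ∈ Finset.range k, (1 - x ^ j) ≥ 1 - x := by
    have h1 : (1 : ℕ) ∈ Finset.range k := Finset.mem_range.mpr (by omega)
    have := Finset.single_le_sum (f := fun j => 1 - x ^ j)
      (fun j _ => by
        show (0:ℝ) ≤ 1 - x ^ j
        linarith [pow_le_one_of_mem x hx j]) h1
    simpa using this
  have hsum : ∑ j ∈ Finset.range k, (1 - x ^ j)
      = (k : ℝ) - ∑ j ∈ Finset.range k, x ^ j := by
    rw [Finset.sum_sub_distrib]; simp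
  nlinarith

private lemma key_step (a : ℕ → ℝ) (ha : ∀ k, 0 ≤ a k) (hsum : HasSum a 1)
    (hd : HasSum (fun k : ℕ => (k : ℝ) * a k) 1)
    (hg : HasSum (fun k : ℕ => if 2 ≤ k then a k else 0) (1 - a 0 - a 1))
    (hα : 0 ≤ 1 - a 0 - a 1)
    (x : ℝ) (hx : x ∈ Set.Icc (-1:ℝ) 1) :
    kernelMap a x ∈ Set.Icc (-1:ℝ) 1 ∧
      1 - kernelMap a x ≤ (1 - x) / ((1 - a 0 - a 1) * (1 - x) + 1) := by
  set α := 1 - a 0 - a 1 with hαdef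
  have hx1 : |x| ≤ 1 := abs_le.mpr ⟨hx.1, hx.2⟩
  have habs : ∀ k, |a k * x ^ k| ≤ a k := by
    intro k
    rw [abs_mul, abs_of_nonneg (ha k), abs_pow]
    calc a k * |x| ^ k ≤ a k * 1 :=
          mul_le_mul_of_nonneg_left (pow_le_one₀ (abs_nonneg x) hx1) (ha k)
      _ = a k := mul_one _
  have hax : Summable (fun k => a k * x ^ k) := by
    apply Summable.of_abs
    exact Summable.of_nonneg_of_le (fun k => abs_nonneg _) habs hsum.summable
  have hK : HasSum (fun k => a k * x ^ k) (kernelMap a x) := hax.hasSum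
  -- κ ≤ 1
  have hκle : kernelMap a x ≤ 1 :=
    hasSum_le (fun k => (abs_le.mp (habs k)).2) hK hsum
  -- κ ≥ -1
  have hκge : -1 ≤ kernelMap a x := by
    have hneg : HasSum (fun k => -(a k)) (-1) := hsum.neg
    exact hasSum_le (fun k => (abs_le.mp (habs k)).1) hneg hK
  set d := 1 - x with hddef
  have hd0 : (0:ℝ) ≤ d := by simp only [hddef]; linarith [hx.2]
  -- e' = 1 - κ
  have hE : HasSum (fun k => a k - a k * x ^ k) (1 - kernelMap a x) := hsum.sub hK
  have hD : HasSum (fun k : ℕ => (k : ℝ) * a k * d) d := by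
    simpa using hd.mul_right d
  -- e' ≤ d
  have he'd : 1 - kernelMap a x ≤ d := by
    apply hasSum_le (fun k => ?_) hE hD
    have := lemA x hx k
    have h1 : a k - a k * x ^ k = a k * (1 - x ^ k) := by ring
    have h2 : a k * (1 - x ^ k) ≤ a k * ((k : ℝ) * d) :=
      mul_le_mul_of_nonneg_left (by simpa [hddef] using this) (ha k)
    rw [h1]; linarith [h2]
  have he'0 : 0 ≤ 1 - kernelMap a x := by linarith
  -- d - e' ≥ α d²
  have hkey : α * d ^ 2 ≤ d - (1 - kernelMap a x) := by
    have hG : HasSum (fun k => (if 2 ≤ k then a k else 0) * d ^ 2) (α * d ^ 2) :=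
      hg.mul_right _
    have hDE : HasSum (fun k : ℕ => (k : ℝ) * a k * d - (a k - a k * x ^ k))
        (d - (1 - kernelMap a x)) := hD.sub hE
    apply hasSum_le (fun k => ?_) hG hDE
    by_cases hk : 2 ≤ k
    · simp only [hk, if_true]
      have hB := lemB x hx k hk
      have h2 : a k * ((1 - x) ^ 2) ≤ a k * ((k : ℝ) * (1 - x) - (1 - x ^ k)) :=
        mul_le_mul_of_nonneg_left hB (ha k)
      have h3 : (k : ℝ) * a k * d - (a k - a k * x ^ k)
          = a k * ((k : ℝ) * (1 - x) - (1 - x ^ k)) := by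
        simp only [hddef]; ring
      rw [h3]
      calc a k * d ^ 2 = a k * ((1 - x) ^ 2) := by rw [hddef]
        _ ≤ _ := h2
    · simp only [hk, if_false, zero_mul]
      have hz : (k : ℝ) * a k * d - (a k - a k * x ^ k) = 0 := by
        have hk01 : k = 0 ∨ k = 1 := by omega
        rcases hk01 with rfl | rfl <;> simp [hddef] <;> ring
      rw [hz]
  -- conclude
  have hden : 0 < α * d + 1 := by nlinarith
  constructor
  · exact ⟨hκge, hκle⟩
  · rw [le_div_iff₀ hden]
    nlinarith [mul_le_mul_of_nonneg_left he'd (mul_nonneg hα hd0)]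

/-- Case `κ(0) > 0` and `κ'(1) = 1`: polynomial convergence of the kernel sequence to `1`,
with rate constant `α = 1 - a₀ - a₁ > 0`. -/
theorem kernel_convergence_to_one_polynomial
    (a : ℕ → ℝ) (ha : ∀ k, 0 ≤ a k) (hsum : HasSum a 1)
    (hnl : ∃ k, 2 ≤ k ∧ 0 < a k) (h0 : 0 < a 0)
    (hd : HasSum (fun k : ℕ => (k : ℝ) * a k) 1)
    (ρ : ℕ → ℝ) (hρ0 : ρ 0 ∈ Set.Ioo (-1 : ℝ) 1)
    (hrec : ∀ ℓ, ρ (ℓ + 1) = kernelMap a (ρ ℓ)) :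
    0 < 1 - a 0 - a 1 ∧
      ∀ ℓ : ℕ, |ρ ℓ - 1| ≤ |ρ 0 - 1| / (ℓ * (1 - a 0 - a 1) * |ρ 0 - 1| + 1) := by
  -- the tail sum
  have hfin : HasSum (fun k : ℕ => if 2 ≤ k then 0 else a k) (a 0 + a 1) := by
    have : ∀ k ∉ ({0, 1} : Finset ℕ), (if 2 ≤ k then 0 else a k) = 0 := by
      intro k hk
      simp only [Finset.mem_insert, Finset.mem_singleton] at hk
      have : 2 ≤ k := by omega
      simp [this]
    have h : HasSum (fun k : ℕ => if 2 ≤ k then 0 else a k)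
        (∑ b ∈ ({0,1} : Finset ℕ), if 2 ≤ b then 0 else a b) :=
      hasSum_sum_of_ne_finset_zero this
    simpa using h
  have hg : HasSum (fun k : ℕ => if 2 ≤ k then a k else 0) (1 - a 0 - a 1) := by
    have h := hsum.sub hfin
    have heq : (fun k => a k - if 2 ≤ k then 0 else a k)
        = fun k : ℕ => if 2 ≤ k then a k else 0 := by
      funext k; by_cases hk : 2 ≤ k <;> simp [hk]
    rw [heq] at h
    rw [sub_sub]; exact h
  obtain ⟨K, hK2, hKpos⟩ := hnl
  have hαpos : 0 < 1 - a 0 - a 1 := by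
    have := le_hasSum hg K (fun j _ => by by_cases h : 2 ≤ j <;> simp [h, ha j])
    simp only [hK2, if_true] at this
    linarith
  set α := 1 - a 0 - a 1 with hαdef
  have hα : 0 ≤ α := le_of_lt hαpos
  refine ⟨hαpos, ?_⟩
  set e₀ := |ρ 0 - 1| with he₀def
  have hρ01 : ρ 0 ≤ 1 := le_of_lt hρ0.2
  have he₀ : e₀ = 1 - ρ 0 := by
    rw [he₀def, abs_sub_comm, abs_of_nonneg (by linarith)]
  have he₀0 : 0 ≤ e₀ := abs_nonneg _
  -- main invariant by induction
  have main : ∀ ℓ : ℕ, ρ ℓ ∈ Set.Icc (-1:ℝ) 1 ∧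
      1 - ρ ℓ ≤ e₀ / ((ℓ : ℝ) * α * e₀ + 1) := by
    intro ℓ
    induction ℓ with
    | zero =>
      refine ⟨⟨le_of_lt hρ0.1, hρ01⟩, ?_⟩
      simp [he₀]
    | succ n ih =>
      obtain ⟨hmem, hbound⟩ := ih
      have hstep := key_step a ha hsum hd hg hα (ρ n) hmem
      rw [← hrec n] at hstep
      refine ⟨hstep.1, ?_⟩
      set en := 1 - ρ n with hendef
      have hen0 : 0 ≤ en := by simp only [hendef]; linarith [hmem.2]
      have h1 : 1 - ρ (n + 1) ≤ en / (α * en + 1) := hstep.2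
      set B := e₀ / ((n : ℝ) * α * e₀ + 1) with hBdef
      have hnn : 0 ≤ (n : ℝ) * α * e₀ :=
        mul_nonneg (mul_nonneg (Nat.cast_nonneg n) hα) he₀0
      have hdenB : 0 < (n : ℝ) * α * e₀ + 1 := by linarith
      have hB0 : 0 ≤ B := div_nonneg he₀0 (le_of_lt hdenB)
      have hmono : en / (α * en + 1) ≤ B / (α * B + 1) := by
        have h2 : 0 < α * en + 1 := by nlinarith
        have h3 : 0 < α * B + 1 := by nlinarith
        rw [div_le_div_iff₀ h2 h3]
        nlinarith [hbound]
      have h3 : 0 < α * B + 1 := by nlinarith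
      have hD2 : 0 < ((n : ℝ) + 1) * α * e₀ + 1 := by nlinarith
      have heq : B / (α * B + 1) = e₀ / (((n : ℝ) + 1) * α * e₀ + 1) := by
        rw [div_eq_div_iff (ne_of_gt h3) (ne_of_gt hD2), hBdef]
        field_simp
        ring
      push_cast
      calc 1 - ρ (n + 1) ≤ en / (α * en + 1) := h1
        _ ≤ B / (α * B + 1) := hmono
        _ = e₀ / (((n : ℝ) + 1) * α * e₀ + 1) := heq
  intro ℓ
  obtain ⟨hmem, hbound⟩ := main ℓ
  have : |ρ ℓ - 1| = 1 - ρ ℓ := by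
    rw [abs_sub_comm, abs_of_nonneg (by linarith [hmem.2])]
  rw [this]
  push_cast
  exact hbound
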